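/- Let $n\ge 3$ be an integer and $\kappa>0$. The function $w(r)=\kappa r+\frac{(n-1)\kappa}{r}$ satisfies $\mathcal J w(r)\le 0$ for every $r\in(0,\infty)$; that is, $w$ is a supersolution of the rotationally symmetric self-expander equation. -/

import Mathlib

/-- The rotationally symmetric self-expander operator
`𝒥 u (r) = u''/(1+u'^2) + ((n-1)/r) u' + (r/2) u' - u/2`. -/
noncomputable def Jop (n : ℕ) (u : ℝ → ℝ) (r : ℝ) : ℝ :=
  deriv (deriv u) r / (1 + (deriv u r) ^ 2) + ((n : ℝ) - 1) / r * deriv u r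
    + r / 2 * deriv u r - u r / 2

lemma aux_hasDerivAt (κ c x : ℝ) (hx : x ≠ 0) :
    HasDerivAt (fun r : ℝ => κ * r + c / r) (κ - c / x ^ 2) x := by
  have h1 : HasDerivAt (fun r : ℝ => κ * r) κ x := by
    simpa using (hasDerivAt_id x).const_mul κ
  have h2 : HasDerivAt (fun r : ℝ => c / r) (-(c / x ^ 2)) x := by
    have := (hasDerivAt_inv hx).const_mul c
    simpa [div_eq_mul_inv, neg_div, mul_comm] using this
  rw [sub_eq_add_neg]; exact h1.add h2

lemma aux_hasDerivAt2 (κ c x : ℝ) (hx : x ≠ 0) :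
    HasDerivAt (fun r : ℝ => κ - c / r ^ 2) (2 * c / x ^ 3) x := by
  have hx2 : x ^ 2 ≠ 0 := pow_ne_zero 2 hx
  have h : HasDerivAt (fun r : ℝ => (r ^ 2)⁻¹) (-(2 * x) / (x ^ 2) ^ 2) x := by
    have hp : HasDerivAt (fun r : ℝ => r ^ 2) (2 * x) x := by
      simpa using hasDerivAt_pow 2 x
    exact hp.inv hx2
  have h2 : HasDerivAt (fun r : ℝ => κ - c * (r ^ 2)⁻¹)
      (-(c * (-(2 * x) / (x ^ 2) ^ 2))) x := (h.const_mul c).const_sub κ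
  have heq : -(c * (-(2 * x) / (x ^ 2) ^ 2)) = 2 * c / x ^ 3 := by
    field_simp
  rw [heq] at h2
  simpa [div_eq_mul_inv] using h2

/-- For `n ≥ 3` and `κ > 0`, the function `w(r) = κ r + (n-1)κ/r` is a supersolution of the
rotationally symmetric self-expander equation: `𝒥 w ≤ 0` on `(0, ∞)`. -/
theorem stmt0 (n : ℕ) (hn : 3 ≤ n) (κ : ℝ) (hκ : 0 < κ) :
    ∀ r : ℝ, 0 < r → Jop n (fun r => κ * r + ((n : ℝ) - 1) * κ / r) r ≤ 0 := by
  intro r hr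
  have hr0 : r ≠ 0 := hr.ne'
  set c : ℝ := ((n : ℝ) - 1) * κ with hc
  have hd1 : deriv (fun r : ℝ => κ * r + c / r) r = κ - c / r ^ 2 :=
    (aux_hasDerivAt κ c r hr0).deriv
  have hEq : deriv (fun r : ℝ => κ * r + c / r) =ᶠ[nhds r] fun x => κ - c / x ^ 2 := by
    filter_upwards [isOpen_compl_singleton.mem_nhds (by simpa using hr0 :
      r ∈ ({0}ᶜ : Set ℝ))] with x hx
    exact (aux_hasDerivAt κ c x hx).deriv
  have hd2 : deriv (deriv (fun r : ℝ => κ * r + c / r)) r = 2 * c / r ^ 3 := by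
    rw [hEq.deriv_eq]
    exact (aux_hasDerivAt2 κ c r hr0).deriv
  have hn' : (2 : ℝ) ≤ (n : ℝ) - 1 := by
    have : (3 : ℝ) ≤ (n : ℝ) := by exact_mod_cast hn
    linarith
  have hcpos : 0 < c := by
    have : (0:ℝ) < (n : ℝ) - 1 := by linarith
    exact mul_pos this hκ
  unfold Jop
  rw [hd1, hd2]
  have hD : (1 : ℝ) ≤ 1 + (κ - c / r ^ 2) ^ 2 := by nlinarith [sq_nonneg (κ - c / r ^ 2)]
  have h1 : 2 * c / r ^ 3 / (1 + (κ - c / r ^ 2) ^ 2) ≤ 2 * c / r ^ 3 :=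
    div_le_self (by positivity) hD
  have h2 : ((n : ℝ) - 1) / r * (κ - c / r ^ 2) + r / 2 * (κ - c / r ^ 2)
      - (κ * r + c / r) / 2 = -(((n : ℝ) - 1) * c / r ^ 3) := by
    rw [hc]; field_simp; ring
  have h3 : 2 * c / r ^ 3 ≤ ((n : ℝ) - 1) * c / r ^ 3 := by
    apply div_le_div_of_nonneg_right ?_ (by positivity) |>.trans_eq rfl
    nlinarith
  linarith [h1, h3, h2.le, h2.ge]
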